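/- Fix a real number q with 0 < q < 1 and a half-integer m ≥ 1/2. Then: (i) the real symmetric 2×2 matrix [[−q⁷λ_{−m}, −q⁷c_{−m+1}], [−q⁷c_{−m+1}, q⁵]] has determinant 0, and its eigenvalues are exactly 0 and q⁵ − q⁷λ_{−m}; (ii) the real symmetric 2×2 matrix [[q⁵, −q⁴c_m], [−q⁴c_m, q³λ_m]] has determinant 0, and its eigenvalues are exactly 0 and q⁵ + q³λ_m. -/

import Mathlib

/-- `lam q k` is the quantity `λ_k = q² (q^{-4k} - 1)/(1 - q²)` (real exponents via `rpow`). -/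
noncomputable def lam (q k : ℝ) : ℝ := q ^ 2 * (q ^ (-4 * k) - 1) / (1 - q ^ 2)

/-- `cc q m k` is the quantity `c_k` of the spin-`m` representation of quantum `SU_q(2)`:
`c_k = q (1-q²)⁻¹ √((q^{-2k} - q^{2m})(q^{-2m} - q^{-2(k-1)}))` for `-m ≤ k ≤ m`, and `0`
otherwise (in particular `c_{-m-1} = c_{m+1} = 0`). -/
noncomputable def cc (q m k : ℝ) : ℝ :=
  if -m ≤ k ∧ k ≤ m then
    q / (1 - q ^ 2) *
      Real.sqrt ((q ^ (-2 * k) - q ^ (2 * m)) * (q ^ (-2 * m) - q ^ (-2 * (k - 1))))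
  else 0

/-- `nu q m k` is the Laplacian eigenvalue `ν_k = c_{k+1}² + λ_k² + q² c_k²`. -/
noncomputable def nu (q m k : ℝ) : ℝ :=
  cc q m (k + 1) ^ 2 + lam q k ^ 2 + q ^ 2 * cc q m k ^ 2

/-- `k` is a half-integer. -/
def IsHalfInt (k : ℝ) : Prop := ∃ n : ℤ, 2 * k = (n : ℝ)

lemma eig2 (a b d : ℝ) (h : a * d = b ^ 2) :
    {μ : ℝ | ∃ v : Fin 2 → ℝ, v ≠ 0 ∧ (!![a, b; b, d]).mulVec v = μ • v} = {0, a + d} := by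
  ext μ
  simp only [Set.mem_setOf_eq, Set.mem_insert_iff, Set.mem_singleton_iff]
  constructor
  · rintro ⟨v, hv, hMv⟩
    have h0 := congrFun hMv 0
    have h1 := congrFun hMv 1
    simp [Matrix.mulVec, dotProduct, Fin.sum_univ_two] at h0 h1
    obtain ⟨i, hi⟩ := Function.ne_iff.mp hv
    have hx : ((a - μ) * (d - μ) - b ^ 2) * v 0 = 0 := by linear_combination (d - μ) * h0 - b * h1
    have hy : ((a - μ) * (d - μ) - b ^ 2) * v 1 = 0 := by linear_combination (a - μ) * h1 - b * h0
    have hfac : (a - μ) * (d - μ) - b ^ 2 = 0 := by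
      fin_cases i
      · rcases mul_eq_zero.mp hx with h' | h'
        · exact h'
        · exact absurd h' hi
      · rcases mul_eq_zero.mp hy with h' | h'
        · exact h'
        · exact absurd h' hi
    have : μ * (μ - (a + d)) = 0 := by linear_combination hfac - h
    rcases mul_eq_zero.mp this with h' | h'
    · exact Or.inl h'
    · exact Or.inr (by linarith)
  · rintro (rfl | rfl)
    · by_cases ha : a = 0
      · have hb : b = 0 := by
          have hb2 : b ^ 2 = 0 := by rw [← h, ha]; ring
          exact pow_eq_zero_iff (two_ne_zero).elim |>.mp hb2
        refine ⟨![1, 0], ?_, ?_⟩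
        · intro hc; simpa using congrFun hc 0
        · funext i; fin_cases i <;>
            simp [Matrix.mulVec, dotProduct, Fin.sum_univ_two, ha, hb]
      · refine ⟨![b, -a], ?_, ?_⟩
        · intro hc
          exact ha (by simpa using (neg_eq_zero.mp (by simpa using congrFun hc 1)))
        · funext i; fin_cases i <;>
            simp [Matrix.mulVec, dotProduct, Fin.sum_univ_two] <;> nlinarith [h]
    · by_cases hd : d = 0
      · have hb : b = 0 := by
          have hb2 : b ^ 2 = 0 := by rw [← h, hd]; ring
          exact pow_eq_zero_iff (two_ne_zero).elim |>.mp hb2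
        refine ⟨![1, 0], ?_, ?_⟩
        · intro hc; simpa using congrFun hc 0
        · funext i; fin_cases i <;>
            simp [Matrix.mulVec, dotProduct, Fin.sum_univ_two, hd, hb]
      · refine ⟨![b, d], ?_, ?_⟩
        · intro hc; exact hd (by simpa using congrFun hc 1)
        · funext i; fin_cases i <;>
            simp [Matrix.mulVec, dotProduct, Fin.sum_univ_two] <;> nlinarith [h]

lemma key1 (q : ℝ) (hq0 : 0 < q) (hq1 : q < 1) (m : ℝ) (hm0 : 1 / 2 ≤ m) :
    q ^ 2 * (cc q m (-m + 1)) ^ 2 = -(lam q (-m)) := by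
  have ht : 0 < q ^ (2 * m) := Real.rpow_pos_of_pos hq0 _
  have ht1 : q ^ (2 * m) < 1 := Real.rpow_lt_one hq0.le hq1 (by linarith)
  have hq2 : (0:ℝ) < 1 - q ^ 2 := by nlinarith
  set t : ℝ := q ^ (2 * m) with ht_def
  have e2 : q ^ ((-2 : ℝ)) = (q ^ 2)⁻¹ := by
    rw [show (-2 : ℝ) = -((2:ℕ):ℝ) by norm_num, Real.rpow_neg hq0.le, Real.rpow_natCast]
  have e1 : q ^ (-2 * (-m + 1)) = t / q ^ 2 := by
    rw [show -2 * (-m + 1) = 2 * m + (-2) by ring, Real.rpow_add hq0, e2, div_eq_mul_inv]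
  have e3 : q ^ (-2 * m) = t⁻¹ := by
    rw [show -2 * m = -(2 * m) by ring, Real.rpow_neg hq0.le]
  have e4 : q ^ (-2 * ((-m + 1) - 1)) = t := by rw [show -2 * ((-m + 1) - 1) = 2 * m by ring]
  have e5 : q ^ (-4 * (-m : ℝ)) = t ^ 2 := by
    rw [show -4 * (-m) = (2 * m) * ((2:ℕ):ℝ) by push_cast; ring,
      Real.rpow_mul hq0.le, Real.rpow_natCast]
  have hcond : -m ≤ -m + 1 ∧ -m + 1 ≤ m := ⟨by linarith, by linarith⟩
  have hX : (0:ℝ) ≤ (q ^ (-2 * (-m + 1)) - q ^ (2 * m)) *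
      (q ^ (-2 * m) - q ^ (-2 * ((-m + 1) - 1))) := by
    rw [e1, e3, e4, ← ht_def]
    have h1 : t ≤ t / q ^ 2 := by rw [le_div_iff₀ (by positivity)]; nlinarith
    have h2 : t ≤ t⁻¹ := by rw [show t⁻¹ = 1 / t by ring, le_div_iff₀ ht]; nlinarith
    nlinarith
  rw [cc, if_pos hcond, mul_pow, div_pow, Real.sq_sqrt hX, e1, e3, e4, lam, e5, ← ht_def]
  field_simp
  ring

lemma key2 (q : ℝ) (hq0 : 0 < q) (hq1 : q < 1) (m : ℝ) (hm0 : 1 / 2 ≤ m) :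
    (cc q m m) ^ 2 = lam q m := by
  have ht : 0 < q ^ (2 * m) := Real.rpow_pos_of_pos hq0 _
  have ht1 : q ^ (2 * m) < 1 := Real.rpow_lt_one hq0.le hq1 (by linarith)
  have hq2 : (0:ℝ) < 1 - q ^ 2 := by nlinarith
  set t : ℝ := q ^ (2 * m) with ht_def
  have e2 : q ^ ((2 : ℝ)) = q ^ 2 := by
    rw [show (2 : ℝ) = ((2:ℕ):ℝ) by norm_num, Real.rpow_natCast]
  have e3 : q ^ (-2 * m) = t⁻¹ := by
    rw [show -2 * m = -(2 * m) by ring, Real.rpow_neg hq0.le]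
  have e4 : q ^ (-2 * (m - 1)) = t⁻¹ * q ^ 2 := by
    rw [show -2 * (m - 1) = -(2 * m) + 2 by ring, Real.rpow_add hq0, Real.rpow_neg hq0.le, e2]
  have e5 : q ^ (-4 * m) = t⁻¹ ^ 2 := by
    rw [show -4 * m = -(2 * m) * ((2:ℕ):ℝ) by push_cast; ring,
      Real.rpow_mul hq0.le, Real.rpow_natCast, show -(2*m) = -(2*m) from rfl,
      Real.rpow_neg hq0.le, inv_pow]
  have hcond : -m ≤ m ∧ m ≤ m := ⟨by linarith, le_refl m⟩
  have hX : (0:ℝ) ≤ (q ^ (-2 * m) - q ^ (2 * m)) * (q ^ (-2 * m) - q ^ (-2 * (m - 1))) := by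
    rw [e3, e4, ← ht_def]
    have h2 : t ≤ t⁻¹ := by rw [show t⁻¹ = 1 / t by ring, le_div_iff₀ ht]; nlinarith
    have h3 : t⁻¹ * q ^ 2 ≤ t⁻¹ := by nlinarith [inv_pos.mpr ht]
    nlinarith
  rw [cc, if_pos hcond, mul_pow, div_pow, Real.sq_sqrt hX, e3, e4, lam, e5, ← ht_def]
  field_simp

/-- Section 8 of the paper: on the 2-dimensional invariant blocks (`k = -m` and `k = m`), the
matrices of the operator `T = L ∘ d` have determinant `0`, and their eigenvalues are exactly
`0` and `q⁵ - q⁷ λ_{-m}`, respectively `0` and `q⁵ + q³ λ_m`. -/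
theorem eigenvalues_of_T_two_dim_blocks
    (q : ℝ) (hq0 : 0 < q) (hq1 : q < 1)
    (m : ℝ) (hm : IsHalfInt m) (hm0 : 1 / 2 ≤ m) :
    let A : Matrix (Fin 2) (Fin 2) ℝ :=
      !![-(q ^ 7) * lam q (-m), -(q ^ 7) * cc q m (-m + 1);
         -(q ^ 7) * cc q m (-m + 1), q ^ 5]
    let B : Matrix (Fin 2) (Fin 2) ℝ :=
      !![q ^ 5, -(q ^ 4) * cc q m m;
         -(q ^ 4) * cc q m m, q ^ 3 * lam q m]
    (A.det = 0 ∧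
      {μ : ℝ | ∃ v : Fin 2 → ℝ, v ≠ 0 ∧ A.mulVec v = μ • v} =
        {0, q ^ 5 - q ^ 7 * lam q (-m)}) ∧
    (B.det = 0 ∧
      {μ : ℝ | ∃ v : Fin 2 → ℝ, v ≠ 0 ∧ B.mulVec v = μ • v} =
        {0, q ^ 5 + q ^ 3 * lam q m}) := by
  intro A B
  have h1 := key1 q hq0 hq1 m hm0
  have h2 := key2 q hq0 hq1 m hm0
  have hdetA : (-(q ^ 7) * lam q (-m)) * (q ^ 5) = (-(q ^ 7) * cc q m (-m + 1)) ^ 2 := by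
    linear_combination (-(q ^ 12)) * h1
  have hdetB : (q ^ 5) * (q ^ 3 * lam q m) = (-(q ^ 4) * cc q m m) ^ 2 := by
    linear_combination (-(q ^ 8)) * h2
  refine ⟨⟨?_, ?_⟩, ⟨?_, ?_⟩⟩
  · show Matrix.det _ = 0
    rw [Matrix.det_fin_two_of]; linarith [hdetA]
  · rw [show q ^ 5 - q ^ 7 * lam q (-m) = -(q ^ 7) * lam q (-m) + q ^ 5 by ring]
    exact eig2 _ _ _ hdetA
  · show Matrix.det _ = 0
    rw [Matrix.det_fin_two_of]; linarith [hdetB]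
  · rw [show q ^ 5 + q ^ 3 * lam q m = q ^ 5 + q ^ 3 * lam q m by ring]
    exact eig2 _ _ _ hdetB
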